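/- The order of the subgroup D_n of Graphs(n+1) ⋊ S_{n+1} generated by x_1,...,x_n is 2^((n+1)(n-2)/2) · (n+1)!, for n ≥ 2. -/

import Mathlib

open Equiv Finset

abbrev Vtx (n : ℕ) := Fin (n+1)
abbrev Edge (n : ℕ) := {e : Sym2 (Vtx n) // ¬ e.IsDiag}
abbrev Graphs (n : ℕ) := Edge n → ZMod 2

/-- relabelling of edges by a permutation of vertices -/
def permEdge {n : ℕ} (σ : Perm (Vtx n)) : Edge n ≃ Edge n where
  toFun e := ⟨Sym2.map σ e.1, by
    simpa [Sym2.isDiag_map σ.injective] using e.2⟩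
  invFun e := ⟨Sym2.map σ.symm e.1, by
    simpa [Sym2.isDiag_map σ.symm.injective] using e.2⟩
  left_inv e := by
    ext1
    simp [Sym2.map_map]
  right_inv e := by
    ext1
    simp [Sym2.map_map]

/-- action of a vertex permutation on graphs -/
def gact {n : ℕ} (σ : Perm (Vtx n)) : Graphs n ≃+ Graphs n where
  toFun g := fun e => g ((permEdge σ).symm e)
  invFun g := fun e => g (permEdge σ e)
  left_inv g := by funext e; simp
  right_inv g := by funext e; simp
  map_add' g h := rfl

lemma gact_mul {n : ℕ} (σ τ : Perm (Vtx n)) (g : Graphs n) :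
    gact (σ * τ) g = gact σ (gact τ g) := by
  funext e
  simp only [gact, AddEquiv.coe_mk, Equiv.coe_fn_mk, Equiv.symm]
  congr 1
  ext1
  simp [permEdge, Sym2.map_map]
  rfl

/-- the action as a homomorphism to automorphisms, multiplicatively -/
def φn (n : ℕ) : Perm (Vtx n) →* MulAut (Multiplicative (Graphs n)) where
  toFun σ := AddEquiv.toMultiplicative (gact σ)
  map_one' := by
    ext g
    simp [gact, permEdge]
    first | simp [Equiv.Perm.one_symm] | (congr 1; ext1; simp [Sym2.map_id']) | rfl
  map_mul' σ τ := by
    ext g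
    exact congrFun (gact_mul σ τ g.toAdd) _

/-- the ambient group `Graphs(n+1) ⋊ S_{n+1}` -/
abbrev DG (n : ℕ) := SemidirectProduct (Multiplicative (Graphs n)) (Perm (Vtx n)) (φn n)

/-- the single-edge graph with edge `{u,v}` -/
def single {n : ℕ} (u v : Vtx n) : Graphs n :=
  fun e => if e.1 = s(u, v) then 1 else 0

/-- the generator `x_m = (e_{0m}, (0 m))` -/
def xgen {n : ℕ} (m : Vtx n) : DG n :=
  ⟨Multiplicative.ofAdd (single 0 m), Equiv.swap 0 m⟩

/-- the degree of a vertex in a graph -/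
def deg {n : ℕ} (g : Graphs n) (v : Vtx n) : ℕ :=
  (Finset.univ.filter (fun e : Edge n => v ∈ e.1 ∧ g e = 1)).card

/-- the number of edges of a graph -/
def nedges {n : ℕ} (g : Graphs n) : ℕ :=
  (Finset.univ.filter (fun e : Edge n => g e = 1)).card

/-- all degrees even and an even number of edges -/
def evenGraph {n : ℕ} (g : Graphs n) : Prop :=
  (∀ v : Vtx n, Even (deg g v)) ∧ Even (nedges g)

/-- the subgroup generated by the `x_m`, `m = 1, …, n` -/
def Dn (n : ℕ) : Subgroup (DG n) :=
  Subgroup.closure {x | ∃ m : Vtx n, m ≠ 0 ∧ x = xgen m}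

/-- the complete graph -/
def complete (n : ℕ) : Graphs n := fun _ => 1
section Aux

variable {n : ℕ}

def Nsum (g : Graphs n) : ZMod 2 := ∑ e : Edge n, g e

def Dsum (g : Graphs n) (v : Vtx n) : ZMod 2 :=
  ∑ e : Edge n, if v ∈ e.1 then g e else 0

lemma Nsum_add (g h : Graphs n) : Nsum (g + h) = Nsum g + Nsum h := by
  simp [Nsum, Finset.sum_add_distrib]

lemma Dsum_add (g h : Graphs n) (v : Vtx n) :
    Dsum (g + h) v = Dsum g v + Dsum h v := by
  rw [Dsum, Dsum, Dsum, ← Finset.sum_add_distrib]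
  refine Finset.sum_congr rfl fun e _ => ?_
  by_cases hv : v ∈ e.1 <;> simp [hv]

lemma gact_apply (σ : Perm (Vtx n)) (g : Graphs n) (e : Edge n) :
    gact σ g e = g ((permEdge σ).symm e) := rfl

lemma Nsum_gact (σ : Perm (Vtx n)) (g : Graphs n) : Nsum (gact σ g) = Nsum g := by
  refine (Fintype.sum_equiv (permEdge σ) _ _ fun e => ?_).symm
  simp [gact_apply]

theorem permInvApplySelf (σ : Perm (Vtx n)) (x : Vtx n) : σ⁻¹ (σ x) = x := σ.symm_apply_apply x

theorem permApplyInvSelf (σ : Perm (Vtx n)) (x : Vtx n) : σ (σ⁻¹ x) = x := σ.apply_symm_apply x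

lemma mem_permEdge_iff (σ : Perm (Vtx n)) (e : Edge n) (v : Vtx n) :
    v ∈ (permEdge σ e).1 ↔ σ⁻¹ v ∈ e.1 := by
  show v ∈ Sym2.map σ e.1 ↔ _
  rw [Sym2.mem_map]
  constructor
  · rintro ⟨w, hw, hv⟩
    rwa [← hv, permInvApplySelf]
  · intro h
    exact ⟨σ⁻¹ v, h, permApplyInvSelf σ v⟩

lemma Dsum_gact (σ : Perm (Vtx n)) (g : Graphs n) (v : Vtx n) :
    Dsum (gact σ g) v = Dsum g (σ⁻¹ v) := by
  rw [Dsum, Dsum]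
  refine (Fintype.sum_equiv (permEdge σ) _ _ fun e => ?_).symm
  simp only [mem_permEdge_iff, gact_apply, Equiv.symm_apply_apply]

lemma single_comm (u v : Vtx n) : single u v = single v u := by
  funext e; simp [single, Sym2.eq_swap]

lemma gact_single (σ : Perm (Vtx n)) (u v : Vtx n) :
    gact σ (single u v) = single (σ u) (σ v) := by
  funext e
  show (if Sym2.map σ.symm e.1 = s(u,v) then (1:ZMod 2) else 0) = _
  have key : Sym2.map (⇑σ.symm) e.1 = s(u,v) ↔ e.1 = s(σ u, σ v) := by
    constructor
    · intro h
      have h2 := congrArg (Sym2.map σ) h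
      simpa [Sym2.map_map, Sym2.map_pair_eq] using h2
    · intro h
      rw [h]
      simp [Sym2.map_pair_eq]
  simp only [single, key]

lemma gact_one (g : Graphs n) : gact (1 : Perm (Vtx n)) g = g := by
  funext e
  rw [gact_apply]
  congr 1
  ext1
  simp [permEdge, Equiv.Perm.one_symm]

lemma gact_add (σ : Perm (Vtx n)) (g h : Graphs n) :
    gact σ (g + h) = gact σ g + gact σ h := map_add _ _ _

lemma neg_graph (g : Graphs n) : -g = g := by
  funext e
  exact CharTwo.neg_eq _

lemma add_self_graph (g : Graphs n) : g + g = 0 := by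
  funext e
  exact CharTwo.add_self_eq_zero _

lemma Nsum_single {u v : Vtx n} (h : u ≠ v) : Nsum (single u v) = 1 := by
  have hd : ¬ (s(u,v) : Sym2 (Vtx n)).IsDiag := by simp [Sym2.mk_isDiag_iff, h]
  have : ∀ e : Edge n, single u v e = if e = (⟨s(u,v), hd⟩ : Edge n) then 1 else 0 := by
    intro e
    simp [single, Subtype.ext_iff]
  rw [Nsum, Finset.sum_congr rfl fun e _ => this e]
  simp

lemma Dsum_single {u v : Vtx n} (h : u ≠ v) (w : Vtx n) :
    Dsum (single u v) w = (if w = u then 1 else 0) + (if w = v then 1 else 0) := by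
  have hd : ¬ (s(u,v) : Sym2 (Vtx n)).IsDiag := by simp [Sym2.mk_isDiag_iff, h]
  have key : ∀ e : Edge n, (if w ∈ e.1 then single u v e else 0)
      = if e = (⟨s(u,v), hd⟩ : Edge n) then (if w ∈ (s(u,v) : Sym2 (Vtx n)) then 1 else 0) else 0 := by
    intro e
    by_cases he : e = (⟨s(u,v), hd⟩ : Edge n)
    · subst he; simp [single]
    · have h1 : e.1 ≠ s(u,v) := fun hc => he (Subtype.ext hc)
      simp [single, h1, he]
  rw [Dsum, Finset.sum_congr rfl fun e _ => key e]
  rw [Finset.sum_ite_eq' Finset.univ]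
  simp only [Finset.mem_univ, if_true, Sym2.mem_iff]
  by_cases hu : w = u <;> by_cases hv : w = v
  · exact absurd (hu.symm.trans hv) h
  · simp [hu, hv, h]
  · simp [hu, hv, Ne.symm h]
  · simp [hu, hv]

open Multiplicative SemidirectProduct

lemma DG_mul_left (p q : DG n) :
    toAdd (p * q).left = toAdd p.left + gact p.right (toAdd q.left) := rfl

lemma DG_mul_right (p q : DG n) : (p * q).right = p.right * q.right := rfl

lemma DG_inv_left (p : DG n) :
    toAdd (p⁻¹).left = gact p.right⁻¹ (-(toAdd p.left)) := rfl

lemma DG_inv_right (p : DG n) : (p⁻¹).right = p.right⁻¹ := rfl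

lemma mk_mul (g h : Graphs n) (σ τ : Perm (Vtx n)) :
    (⟨ofAdd g, σ⟩ : DG n) * ⟨ofAdd h, τ⟩ = ⟨ofAdd (g + gact σ h), σ * τ⟩ := rfl

lemma mk_inv (g : Graphs n) (σ : Perm (Vtx n)) :
    (⟨ofAdd g, σ⟩ : DG n)⁻¹ = ⟨ofAdd (gact σ⁻¹ (-g)), σ⁻¹⟩ := rfl

/-- the signature bit -/
def sgnBit (σ : Perm (Vtx n)) : ZMod 2 := if Perm.sign σ = 1 then 0 else 1

lemma sgnBit_mul (σ τ : Perm (Vtx n)) : sgnBit (σ * τ) = sgnBit σ + sgnBit τ := by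
  rcases Int.units_eq_one_or (Perm.sign σ) with h1 | h1 <;>
    rcases Int.units_eq_one_or (Perm.sign τ) with h2 | h2 <;>
      simp [sgnBit, map_mul, h1, h2] <;> decide

lemma sgnBit_inv (σ : Perm (Vtx n)) : sgnBit σ⁻¹ = sgnBit σ := by
  rcases Int.units_eq_one_or (Perm.sign σ) with h1 | h1 <;>
    simp [sgnBit, map_inv, h1]

/-- the subgroup of pairs whose degree parities and edge parity are as forced -/
def W (n : ℕ) : Subgroup (DG n) where
  carrier := {p | (∀ v, Dsum (toAdd p.left) v
      = (if v = 0 then 1 else 0) + (if v = p.right 0 then 1 else 0))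
    ∧ Nsum (toAdd p.left) = sgnBit p.right}
  one_mem' := by
    constructor
    · intro v
      show Dsum (toAdd (1 : Multiplicative (Graphs n))) v = _
      show Dsum 0 v = _
      have h0 : Dsum (0 : Graphs n) v = 0 := by simp [Dsum]
      rw [h0]
      exact (CharTwo.add_self_eq_zero _).symm
    · show Nsum 0 = sgnBit 1
      simp [Nsum, sgnBit]
  mul_mem' := by
    rintro p q ⟨hd1, hn1⟩ ⟨hd2, hn2⟩
    constructor
    · intro v
      rw [DG_mul_left, Dsum_add, Dsum_gact, hd1 v, hd2 (p.right⁻¹ v), DG_mul_right]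
      have e1 : (p.right⁻¹ v = 0) ↔ (v = p.right 0) := by
        constructor <;> intro h
        · rw [← h, permApplyInvSelf]
        · rw [h, permInvApplySelf]
      have e2 : (p.right⁻¹ v = q.right 0) ↔ (v = (p.right * q.right) 0) := by
        constructor <;> intro h
        · rw [Perm.mul_apply, ← h, permApplyInvSelf]
        · rw [h, Perm.mul_apply, permInvApplySelf]
      simp only [e1, e2]
      have key : ∀ a b c : ZMod 2, a + b + (b + c) = a + c := by decide
      exact key _ _ _
    · rw [DG_mul_left, Nsum_add, Nsum_gact, hn1, hn2, DG_mul_right, sgnBit_mul]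
  inv_mem' := by
    rintro p ⟨hd, hn⟩
    constructor
    · intro v
      rw [DG_inv_left, neg_graph, Dsum_gact, inv_inv, hd (p.right v), DG_inv_right]
      have e1 : (p.right v = 0) ↔ (v = p.right⁻¹ 0) := by
        constructor <;> intro h
        · rw [← h, permInvApplySelf]
        · rw [h, permApplyInvSelf]
      have e2 : (p.right v = p.right 0) ↔ (v = 0) := by
        simp
      simp only [e1, e2]
      exact add_comm _ _
    · rw [DG_inv_left, neg_graph, Nsum_gact, hn, DG_inv_right, sgnBit_inv]

lemma xgen_eq (m : Vtx n) : xgen m = ⟨ofAdd (single 0 m), Equiv.swap 0 m⟩ := rfl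

lemma Dn_le_W : Dn n ≤ W n := by
  rw [Dn, Subgroup.closure_le]
  rintro x ⟨m, hm, rfl⟩
  constructor
  · intro v
    show Dsum (single 0 m) v = _
    rw [Dsum_single (Ne.symm hm) v]
    show _ = (if v = 0 then 1 else 0) + (if v = Equiv.swap 0 m 0 then (1:ZMod 2) else 0)
    rw [Equiv.swap_apply_left]
  · show Nsum (single 0 m) = sgnBit (Equiv.swap 0 m)
    rw [Nsum_single (Ne.symm hm), sgnBit, Perm.sign_swap (Ne.symm hm)]
    decide

lemma rightHom_xgen (m : Vtx n) : rightHom (xgen m) = Equiv.swap 0 m := rfl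

lemma map_Dn : (Dn n).map (rightHom : DG n →* Perm (Vtx n)) = ⊤ := by
  rw [Dn, MonoidHom.map_closure, eq_top_iff, ← Equiv.Perm.closure_isSwap, Subgroup.closure_le]
  rintro τ ⟨a, b, hab, rfl⟩
  have base : ∀ m : Vtx n, m ≠ 0 → Equiv.swap 0 m ∈
      Subgroup.closure ((rightHom : DG n →* Perm (Vtx n)) '' {x | ∃ m, m ≠ 0 ∧ x = xgen m}) :=
    fun m hm => Subgroup.subset_closure ⟨xgen m, ⟨m, hm, rfl⟩, rfl⟩
  by_cases ha : a = 0
  · subst ha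
    exact base b (Ne.symm hab)
  by_cases hb : b = 0
  · subst hb
    rw [Equiv.swap_comm]
    exact base a ha
  · have key : Equiv.swap a b = Equiv.swap 0 a * Equiv.swap 0 b * (Equiv.swap 0 a)⁻¹ := by
      have : Equiv.swap a b
          = Equiv.swap ((Equiv.swap 0 a) 0) ((Equiv.swap 0 a) b) := by
        rw [Equiv.swap_apply_left, Equiv.swap_apply_of_ne_of_ne hb (Ne.symm hab)]
      rw [this, Equiv.swap_apply_apply]
    rw [key]
    exact mul_mem (mul_mem (base a ha) (base b hb)) (inv_mem (base a ha))

lemma nedges_cast (g : Graphs n) : ((nedges g : ZMod 2)) = Nsum g := by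
  calc ((nedges g : ZMod 2))
      = ∑ e ∈ Finset.univ.filter (fun e : Edge n => g e = 1), (1 : ZMod 2) := by
        simp [nedges]
    _ = ∑ e ∈ Finset.univ.filter (fun e : Edge n => g e = 1), g e :=
        Finset.sum_congr rfl fun e he => ((Finset.mem_filter.1 he).2).symm
    _ = Nsum g := Finset.sum_filter_of_ne fun e _ h => by
        revert h
        generalize g e = x
        revert x
        decide

lemma deg_cast (g : Graphs n) (v : Vtx n) : ((deg g v : ZMod 2)) = Dsum g v := by
  calc ((deg g v : ZMod 2))
      = ∑ e ∈ Finset.univ.filter (fun e : Edge n => v ∈ e.1 ∧ g e = 1), (1 : ZMod 2) := by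
        simp [deg]
    _ = ∑ e ∈ Finset.univ.filter (fun e : Edge n => v ∈ e.1 ∧ g e = 1),
          (if v ∈ e.1 then g e else 0) :=
        Finset.sum_congr rfl fun e he => by
          have h := (Finset.mem_filter.1 he).2
          rw [if_pos h.1, h.2]
    _ = Dsum g v := Finset.sum_filter_of_ne fun e _ h => by
        by_cases hv : v ∈ e.1
        · refine ⟨hv, ?_⟩
          rw [if_pos hv] at h
          revert h
          generalize g e = x
          revert x
          decide
        · rw [if_neg hv] at h
          exact absurd rfl h

lemma even_iff_cast (k : ℕ) : Even k ↔ (k : ZMod 2) = 0 := by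
  rw [ZMod.natCast_eq_zero_iff, even_iff_two_dvd]

/-- graphs `g` such that `(g, 1)` lies in `Dn` -/
def Kset (n : ℕ) : Set (Graphs n) := {g | (⟨ofAdd g, 1⟩ : DG n) ∈ Dn n}

lemma Kset_zero : (0 : Graphs n) ∈ Kset n := one_mem (Dn n)

lemma Kset_add {g h : Graphs n} (hg : g ∈ Kset n) (hh : h ∈ Kset n) :
    g + h ∈ Kset n := by
  have hg' : (⟨ofAdd g, 1⟩ : DG n) ∈ Dn n := hg
  have hh' : (⟨ofAdd h, 1⟩ : DG n) ∈ Dn n := hh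
  have hm := mul_mem hg' hh'
  rw [mk_mul, gact_one, one_mul] at hm
  exact hm

lemma exists_graph (σ : Perm (Vtx n)) : ∃ h : Graphs n, (⟨ofAdd h, σ⟩ : DG n) ∈ Dn n := by
  have hσ : σ ∈ (Dn n).map (rightHom : DG n →* Perm (Vtx n)) := by
    rw [map_Dn]; trivial
  obtain ⟨p, hp, hσ⟩ := hσ
  refine ⟨toAdd p.left, ?_⟩
  have hper : (⟨ofAdd (toAdd p.left), σ⟩ : DG n) = p := by
    cases p
    cases hσ
    rfl
  rwa [hper]

lemma Kset_gact {g : Graphs n} (σ : Perm (Vtx n)) (hg : g ∈ Kset n) :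
    gact σ g ∈ Kset n := by
  obtain ⟨h, hh⟩ := exists_graph σ
  have hmem := mul_mem (mul_mem hh hg) (inv_mem hh)
  rw [mk_mul, mk_inv, mk_mul] at hmem
  have e2 : (σ * 1) * σ⁻¹ = 1 := by group
  have e1 : h + gact σ g + gact (σ * 1) (gact σ⁻¹ (-h)) = gact σ g := by
    rw [neg_graph, mul_one, ← gact_mul, mul_inv_cancel, gact_one,
      show h + gact σ g + h = (h + h) + gact σ g from by abel, add_self_graph, zero_add]
  rw [e2, e1] at hmem
  exact hmem

lemma diff_mem {g h : Graphs n} {σ : Perm (Vtx n)}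
    (hg : (⟨ofAdd g, σ⟩ : DG n) ∈ Dn n) (hh : (⟨ofAdd h, σ⟩ : DG n) ∈ Dn n) :
    g + h ∈ Kset n := by
  have hmem := mul_mem hg (inv_mem hh)
  rw [mk_inv, mk_mul, ← gact_mul, mul_inv_cancel, gact_one, neg_graph] at hmem
  exact hmem

/-- triangle graph -/
def tri (u v w : Vtx n) : Graphs n := single u v + single u w + single v w

lemma gact_tri (σ : Perm (Vtx n)) (u v w : Vtx n) :
    gact σ (tri u v w) = tri (σ u) (σ v) (σ w) := by
  rw [tri, tri, gact_add, gact_add, gact_single, gact_single, gact_single]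

lemma y_mem {a b : Vtx n} (ha : a ≠ 0) (hb : b ≠ 0) (hab : a ≠ b) :
    (⟨ofAdd (tri 0 a b), Equiv.swap a b⟩ : DG n) ∈ Dn n := by
  have xmem : ∀ m : Vtx n, m ≠ 0 → xgen m ∈ Dn n :=
    fun m hm => Subgroup.subset_closure ⟨m, hm, rfl⟩
  have hmem := mul_mem (mul_mem (xmem a ha) (xmem b hb)) (xmem a ha)
  rw [xgen_eq, xgen_eq, mk_mul, mk_mul] at hmem
  have eg : single 0 a + gact (Equiv.swap 0 a) (single 0 b)
      + gact (Equiv.swap 0 a * Equiv.swap 0 b) (single 0 a) = tri 0 a b := by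
    simp [gact_mul, gact_single, Equiv.swap_apply_of_ne_of_ne,
      ha, hb, hab, Ne.symm hab]
    rw [tri, single_comm b 0]
    abel
  have ep : Equiv.swap 0 a * Equiv.swap 0 b * Equiv.swap 0 a = Equiv.swap a b := by
    have h1 : Equiv.swap a b
        = Equiv.swap ((Equiv.swap 0 a) 0) ((Equiv.swap 0 a) b) := by
      rw [Equiv.swap_apply_left, Equiv.swap_apply_of_ne_of_ne hb (Ne.symm hab)]
    conv_rhs => rw [h1, Equiv.swap_apply_apply, Equiv.swap_inv]
  rw [eg, ep] at hmem
  exact hmem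

lemma z_mem {a b c : Vtx n} (ha : a ≠ 0) (hb : b ≠ 0) (hc : c ≠ 0)
    (hab : a ≠ b) (hac : a ≠ c) (hbc : b ≠ c) :
    (⟨ofAdd (tri c a b), Equiv.swap a b⟩ : DG n) ∈ Dn n := by
  have xmem : ∀ m : Vtx n, m ≠ 0 → xgen m ∈ Dn n :=
    fun m hm => Subgroup.subset_closure ⟨m, hm, rfl⟩
  have hmem := mul_mem (mul_mem (xmem c hc) (y_mem ha hb hab)) (xmem c hc)
  rw [xgen_eq, mk_mul, mk_mul] at hmem
  have eg : single 0 c + gact (Equiv.swap 0 c) (tri 0 a b)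
      + gact (Equiv.swap 0 c * Equiv.swap a b) (single 0 c) = tri c a b := by
    simp [gact_mul, gact_tri, gact_single, Equiv.swap_apply_of_ne_of_ne,
      ha, hb, hc, hab, hac, hbc, Ne.symm ha, Ne.symm hb, Ne.symm hc,
      Ne.symm hab, Ne.symm hac, Ne.symm hbc]
    rw [single_comm c 0,
      show single 0 c + tri c a b + single 0 c = (single 0 c + single 0 c) + tri c a b
        from by abel, add_self_graph, zero_add]
  have ep : Equiv.swap 0 c * Equiv.swap a b * Equiv.swap 0 c = Equiv.swap a b := by
    have h1 : Equiv.swap a b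
        = Equiv.swap ((Equiv.swap 0 c) a) ((Equiv.swap 0 c) b) := by
      rw [Equiv.swap_apply_of_ne_of_ne ha hac, Equiv.swap_apply_of_ne_of_ne hb hbc]
    conv_rhs => rw [h1, Equiv.swap_apply_apply, Equiv.swap_inv]
  rw [eg, ep] at hmem
  exact hmem

/-- four-cycle graph -/
def quad (a b c d : Vtx n) : Graphs n := single a c + single a d + single b c + single b d

lemma quad_comm (a b c d : Vtx n) : quad a b c d = quad b a c d := by
  rw [quad, quad]; abel

lemma quad_swap (a b c d : Vtx n) : quad a b c d = quad c d a b := by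
  rw [quad, quad, single_comm c a, single_comm c b, single_comm d a, single_comm d b]
  abel

lemma quad_mem_base1 {a b c : Vtx n} (ha : a ≠ 0) (hb : b ≠ 0) (hc : c ≠ 0)
    (hab : a ≠ b) (hac : a ≠ c) (hbc : b ≠ c) :
    quad 0 c a b ∈ Kset n := by
  have e : quad 0 c a b = tri 0 a b + tri c a b := by
    have h1 : tri 0 a b + tri c a b = quad 0 c a b + (single a b + single a b) := by
      rw [quad, tri, tri]; abel
    rw [add_self_graph, add_zero] at h1
    exact h1.symm
  rw [e]
  exact diff_mem (y_mem ha hb hab) (z_mem ha hb hc hab hac hbc)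

lemma quad_mem_base2 {a b c d : Vtx n} (ha : a ≠ 0) (hb : b ≠ 0) (hc : c ≠ 0) (hd : d ≠ 0)
    (hab : a ≠ b) (hac : a ≠ c) (had : a ≠ d) (hbc : b ≠ c) (hbd : b ≠ d) (hcd : c ≠ d) :
    quad c d a b ∈ Kset n := by
  have e : quad c d a b = tri c a b + tri d a b := by
    have h1 : tri c a b + tri d a b = quad c d a b + (single a b + single a b) := by
      rw [quad, tri, tri]; abel
    rw [add_self_graph, add_zero] at h1
    exact h1.symm
  rw [e]
  exact diff_mem (z_mem ha hb hc hab hac hbc) (z_mem ha hb hd hab had hbd)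

lemma quad_mem {a b c d : Vtx n}
    (hab : a ≠ b) (hac : a ≠ c) (had : a ≠ d) (hbc : b ≠ c) (hbd : b ≠ d) (hcd : c ≠ d) :
    quad a b c d ∈ Kset n := by
  by_cases ha : a = 0
  · subst ha
    exact quad_mem_base1 (Ne.symm hac) (Ne.symm had) (Ne.symm hab) hcd
      (Ne.symm hbc) (Ne.symm hbd)
  by_cases hb : b = 0
  · subst hb
    rw [quad_comm]
    exact quad_mem_base1 (Ne.symm hbc) (Ne.symm hbd) ha hcd (Ne.symm hac) (Ne.symm had)
  by_cases hc : c = 0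
  · subst hc
    rw [quad_swap]
    exact quad_mem_base1 ha hb (Ne.symm hcd) hab had hbd
  by_cases hd : d = 0
  · subst hd
    rw [quad_swap, quad_comm]
    exact quad_mem_base1 ha hb hcd hab hac hbc
  · exact quad_mem_base2 hc hd ha hb hcd (Ne.symm hac) (Ne.symm hbc) (Ne.symm had) (Ne.symm hbd) hab

lemma Dsum_quad {a b c d : Vtx n} (hac : a ≠ c) (had : a ≠ d) (hbc : b ≠ c) (hbd : b ≠ d)
    (v : Vtx n) : Dsum (quad a b c d) v = 0 := by
  rw [quad, Dsum_add, Dsum_add, Dsum_add, Dsum_single hac, Dsum_single had,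
    Dsum_single hbc, Dsum_single hbd]
  have key : ∀ A B C D : ZMod 2, A + C + (A + D) + (B + C) + (B + D) = 0 := by decide
  exact key _ _ _ _

lemma Nsum_quad {a b c d : Vtx n} (hac : a ≠ c) (had : a ≠ d) (hbc : b ≠ c) (hbd : b ≠ d) :
    Nsum (quad a b c d) = 0 := by
  rw [quad, Nsum_add, Nsum_add, Nsum_add, Nsum_single hac, Nsum_single had,
    Nsum_single hbc, Nsum_single hbd]
  decide

/-- the larger endpoint of an edge -/
def topV (e : Edge n) : Vtx n :=
  Sym2.lift ⟨fun x y => max x y, fun x y => max_comm x y⟩ e.1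

lemma mkE_aux {p q : Vtx n} (h : p ≠ q) : ¬ (s(p,q) : Sym2 (Vtx n)).IsDiag := by
  simp [Sym2.mk_isDiag_iff, h]

/-- edge constructor -/
def mkE {p q : Vtx n} (h : p ≠ q) : Edge n := ⟨s(p,q), mkE_aux h⟩

lemma topV_mkE {p q : Vtx n} (h : p ≠ q) : topV (mkE h) = max p q := rfl

lemma mem_le_topV : ∀ {e : Edge n} {w : Vtx n}, w ∈ e.1 → w ≤ topV e := by
  rintro ⟨e1, hnd⟩ w hw
  induction e1 using Sym2.ind with
  | _ p q =>
    rw [Sym2.mem_iff] at hw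
    show w ≤ max p q
    rcases hw with rfl | rfl
    · exact le_max_left _ _
    · exact le_max_right _ _

lemma topV_mem (e : Edge n) : topV e ∈ e.1 := by
  obtain ⟨e1, hnd⟩ := e
  induction e1 using Sym2.ind with
  | _ p q =>
    show max p q ∈ (s(p,q) : Sym2 (Vtx n))
    rcases max_choice p q with h | h <;> rw [h] <;> simp

/-- edge weight -/
def wt (e : Edge n) : ℕ := 4 ^ (topV e).val

/-- weighted edge count -/
def mu (g : Graphs n) : ℕ := ∑ e : Edge n, (if g e = 1 then wt e else 0)

lemma single_apply {p q : Vtx n} (h : p ≠ q) (e : Edge n) :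
    single p q e = if e = mkE h then 1 else 0 := by
  simp [single, mkE, Subtype.ext_iff]

lemma zmod2_ne_one {x : ZMod 2} (h : x ≠ 1) : x = 0 := by revert h; revert x; decide

lemma zmod2_ne_zero {x : ZMod 2} (h : x ≠ 0) : x = 1 := by revert h; revert x; decide

lemma ev_mem_aux :
    ∀ (N : ℕ) (g : Graphs n), mu g = N → (∀ v, Dsum g v = 0) → Nsum g = 0 → g ∈ Kset n := by
  intro N
  induction N using Nat.strong_induction_on with
  | _ N ih =>
  intro g hN h1 h2
  by_cases hg0 : g = 0
  · subst hg0; exact Kset_zero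
  have hex : ∃ e : Edge n, g e = 1 := by
    by_contra hc
    push_neg at hc
    exact hg0 (funext fun e => zmod2_ne_one (hc e))
  obtain ⟨e', he'⟩ := hex
  classical
  set S : Finset (Edge n) := Finset.univ.filter (fun e => g e = 1) with hSdef
  have hmemS : ∀ e : Edge n, e ∈ S ↔ g e = 1 := fun e => by simp [hSdef]
  have hSne : S.Nonempty := ⟨e', (hmemS e').2 he'⟩
  set v : Vtx n := S.sup' hSne topV with hvdef
  have hvmax : ∀ e ∈ S, topV e ≤ v := fun e he => Finset.le_sup' topV he
  obtain ⟨e₀, he₀S, he₀⟩ := Finset.exists_mem_eq_sup' hSne topV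
  have hge₀ : g e₀ = 1 := (hmemS e₀).1 he₀S
  have hve₀ : v ∈ e₀.1 := by rw [hvdef, he₀]; exact topV_mem e₀
  set a : Vtx n := (Sym2.Mem.other hve₀) with hadef
  have he₀eq : e₀.1 = s(v, a) := (Sym2.other_spec hve₀).symm
  have hav : a ≠ v := Sym2.other_ne e₀.2 hve₀
  have hale : a < v := by
    refine lt_of_le_of_ne ?_ hav
    have hamem : a ∈ e₀.1 := he₀eq ▸ Sym2.mem_mk_right v a
    have h := (mem_le_topV hamem).trans_eq he₀.symm
    rwa [← hvdef] at h
  -- a second edge at `v`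
  set F : Finset (Edge n) := Finset.univ.filter (fun e : Edge n => v ∈ e.1 ∧ g e = 1) with hFdef
  have hdegF : deg g v = F.card := rfl
  have hFeven : Even F.card := by
    rw [← hdegF, even_iff_cast, deg_cast, h1 v]
  have he₀F : e₀ ∈ F := by
    rw [hFdef, Finset.mem_filter]
    exact ⟨Finset.mem_univ _, hve₀, hge₀⟩
  have hF1 : 1 < F.card := by
    have h0 : F.card ≠ 0 := Finset.card_ne_zero_of_mem he₀F
    obtain ⟨k, hk⟩ := hFeven
    omega
  obtain ⟨e₁, he₁F, he₁ne⟩ := Finset.exists_mem_ne hF1 e₀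
  have hve₁ : v ∈ e₁.1 := by
    rw [hFdef, Finset.mem_filter] at he₁F
    exact he₁F.2.1
  have hge₁ : g e₁ = 1 := by
    rw [hFdef, Finset.mem_filter] at he₁F
    exact he₁F.2.2
  set b : Vtx n := (Sym2.Mem.other hve₁) with hbdef
  have he₁eq : e₁.1 = s(v, b) := (Sym2.other_spec hve₁).symm
  have hbv : b ≠ v := Sym2.other_ne e₁.2 hve₁
  have hble : b < v := by
    refine lt_of_le_of_ne ?_ hbv
    have hbmem : b ∈ e₁.1 := he₁eq ▸ Sym2.mem_mk_right v b
    exact (mem_le_topV hbmem).trans (hvmax e₁ ((hmemS e₁).2 hge₁))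
  have hba : b ≠ a := by
    intro hcon
    apply he₁ne
    apply Subtype.ext
    rw [he₁eq, he₀eq, hcon]
  clear_value S v a b F
  have ha'v : a.val < v.val := Fin.lt_def.1 hale
  have hb'v : b.val < v.val := Fin.lt_def.1 hble
  have hab' : a.val ≠ b.val := fun hc => hba (Fin.ext hc.symm)
  by_cases hv3 : 3 ≤ v.val
  · -- main step: clear two edges at `v`
    set uN : ℕ := if 0 ≠ a.val ∧ 0 ≠ b.val then 0 else
      if 1 ≠ a.val ∧ 1 ≠ b.val then 1 else 2 with huNdef
    have huN : uN ≠ a.val ∧ uN ≠ b.val ∧ uN < 3 := by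
      rw [huNdef]
      split_ifs with hc1 hc2
      · exact ⟨hc1.1, hc1.2, by norm_num⟩
      · exact ⟨hc2.1, hc2.2, by norm_num⟩
      · rw [not_and_or] at hc1 hc2
        push_neg at hc1 hc2
        exact ⟨by omega, by omega, by norm_num⟩
    clear_value uN
    have hult : uN < n + 1 := by
      have := v.isLt
      omega
    set u : Vtx n := ⟨uN, hult⟩ with hudef
    have hua : u ≠ a := fun hc => huN.1 (congrArg Fin.val hc)
    have hub : u ≠ b := fun hc => huN.2.1 (congrArg Fin.val hc)
    have huv : u < v := by
      rw [Fin.lt_def]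
      show uN < v.val
      omega
    have hu'v : u.val < v.val := Fin.lt_def.1 huv
    have hvu : v ≠ u := (ne_of_lt huv).symm
    clear_value u
    have hva : v ≠ a := hav.symm
    have hvb : v ≠ b := hbv.symm
    have hab : a ≠ b := fun hc => hba hc.symm
    -- the four special edges
    set E1 : Edge n := mkE hva with hE1
    set E2 : Edge n := mkE hvb with hE2
    set E3 : Edge n := mkE hua with hE3
    set E4 : Edge n := mkE hub with hE4
    have he₀E1 : e₀ = E1 := Subtype.ext he₀eq
    have he₁E2 : e₁ = E2 := Subtype.ext he₁eq
    have hmkE_ne : ∀ {p q r s : Vtx n} (hpq : p ≠ q) (hrs : r ≠ s),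
        ¬ ((p = r ∧ q = s) ∨ (p = s ∧ q = r)) → mkE hpq ≠ mkE hrs := by
      intro p q r s hpq hrs hno hc
      exact hno (Sym2.eq_iff.1 (congrArg Subtype.val hc))
    have h12 : E1 ≠ E2 := hmkE_ne _ _ (by simp [hab, hvb])
    have h13 : E1 ≠ E3 := hmkE_ne _ _ (by simp [hvu, hva])
    have h14 : E1 ≠ E4 := hmkE_ne _ _ (by simp [hvu, hvb])
    have h23 : E2 ≠ E3 := hmkE_ne _ _ (by simp [hvu, hva])
    have h24 : E2 ≠ E4 := hmkE_ne _ _ (by simp [hvu, hvb])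
    have h34 : E3 ≠ E4 := hmkE_ne _ _ (by simp [hab, hub])
    clear_value E1 E2 E3 E4
    set q : Graphs n := quad v u a b with hqdef
    clear_value q
    have hqe : ∀ e : Edge n, q e =
        (((if e = E1 then 1 else 0) + (if e = E2 then 1 else 0))
        + (if e = E3 then 1 else 0)) + (if e = E4 then 1 else 0) := by
      intro e
      rw [hqdef]
      show single v a e + single v b e + single u a e + single u b e = _
      rw [single_apply hva e, single_apply hvb e, single_apply hua e, single_apply hub e,
        hE1, hE2, hE3, hE4]
    have hqE1 : q E1 = 1 := by
      rw [hqe]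
      simp [h12, h13, h14]
    have hqE2 : q E2 = 1 := by
      rw [hqe]
      simp [Ne.symm h12, h23, h24]
    have hq_other : ∀ e : Edge n, e ≠ E1 → e ≠ E2 → e ≠ E3 → e ≠ E4 → q e = 0 := by
      intro e k1 k2 k3 k4
      rw [hqe]
      simp [k1, k2, k3, k4]
    set g' : Graphs n := g + q with hg'def
    clear_value g'
    have h1' : ∀ w, Dsum g' w = 0 := by
      intro w
      rw [hg'def, Dsum_add, h1 w, hqdef, Dsum_quad hva hvb hua hub w, add_zero]
    have h2' : Nsum g' = 0 := by
      rw [hg'def, Nsum_add, h2, hqdef, Nsum_quad hva hvb hua hub, add_zero]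
    have hqK : q ∈ Kset n := by
      rw [hqdef]
      exact quad_mem hvu hva hvb hua hub hab
    -- the measure decreases
    set T : Finset (Edge n) := {E1, E2, E3, E4} with hT
    clear_value T
    have houtside : ∀ e, e ∉ T →
        (if g' e = 1 then wt e else 0) = (if g e = 1 then wt e else 0) := by
      intro e he
      rw [hT] at he
      simp only [Finset.mem_insert, Finset.mem_singleton, not_or] at he
      have hqe0 : q e = 0 := hq_other e he.1 he.2.1 he.2.2.1 he.2.2.2
      have : g' e = g e := by
        rw [hg'def]
        show g e + q e = g e
        rw [hqe0, add_zero]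
      rw [this]
    have hsumT : ∀ f : Edge n → ℕ, ∑ e ∈ T, f e = f E1 + (f E2 + (f E3 + f E4)) := by
      intro f
      rw [hT, Finset.sum_insert (by simp [h12, h13, h14]),
        Finset.sum_insert (by simp [h23, h24]),
        Finset.sum_insert (by simp [h34]), Finset.sum_singleton]
    have hwtE1 : wt E1 = 4 ^ v.val := by
      rw [hE1, wt, topV_mkE, max_eq_left (le_of_lt hale)]
    have hwt3 : wt E3 ≤ 4 ^ (v.val - 1) := by
      rw [hE3, wt, topV_mkE]
      refine Nat.pow_le_pow_right (by norm_num) ?_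
      rcases max_choice u a with h | h <;> rw [h] <;> omega
    have hwt4 : wt E4 ≤ 4 ^ (v.val - 1) := by
      rw [hE4, wt, topV_mkE]
      refine Nat.pow_le_pow_right (by norm_num) ?_
      rcases max_choice u b with h | h <;> rw [h] <;> omega
    have hg'E1 : g' E1 = 0 := by
      have hgE1 : g E1 = 1 := he₀E1 ▸ hge₀
      rw [hg'def]
      show g E1 + q E1 = 0
      rw [hgE1, hqE1]
      decide
    have hg'E2 : g' E2 = 0 := by
      have hgE2 : g E2 = 1 := he₁E2 ▸ hge₁
      rw [hg'def]
      show g E2 + q E2 = 0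
      rw [hgE2, hqE2]
      decide
    have hup : ∑ e ∈ T, (if g' e = 1 then wt e else 0) ≤ 4^(v.val-1) + 4^(v.val-1) := by
      rw [hsumT]
      rw [if_neg (by rw [hg'E1]; decide), if_neg (by rw [hg'E2]; decide)]
      have k3 : (if g' E3 = 1 then wt E3 else 0) ≤ 4 ^ (v.val - 1) := by
        split
        · exact hwt3
        · exact Nat.zero_le _
      have k4 : (if g' E4 = 1 then wt E4 else 0) ≤ 4 ^ (v.val - 1) := by
        split
        · exact hwt4
        · exact Nat.zero_le _
      omega
    have hlow : 4 ^ v.val ≤ ∑ e ∈ T, (if g e = 1 then wt e else 0) := by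
      rw [hsumT]
      have k1 : (if g E1 = 1 then wt E1 else 0) = 4 ^ v.val := by
        rw [if_pos (he₀E1 ▸ hge₀), hwtE1]
      omega
    have hpow : 4^(v.val-1) + 4^(v.val-1) < 4 ^ v.val := by
      have hx : 0 < 4 ^ (v.val - 1) := pow_pos (by norm_num) _
      have h4 : 4 ^ (v.val) = 4 ^ (v.val - 1) * 4 := by
        rw [← pow_succ]
        congr 1
        omega
      omega
    have hmu' : mu g' < mu g := by
      rw [mu, mu, ← Finset.sum_add_sum_compl T (fun e => if g' e = 1 then wt e else 0),
        ← Finset.sum_add_sum_compl T (fun e => if g e = 1 then wt e else 0)]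
      have hcompl : ∑ e ∈ Tᶜ, (if g' e = 1 then wt e else 0)
          = ∑ e ∈ Tᶜ, (if g e = 1 then wt e else 0) :=
        Finset.sum_congr rfl fun e he => houtside e (Finset.mem_compl.1 he)
      rw [hcompl]
      exact Nat.add_lt_add_right (lt_of_le_of_lt hup (lt_of_lt_of_le hpow hlow)) _
    have hg'K : g' ∈ Kset n := ih (mu g') (hN ▸ hmu') g' rfl h1' h2'
    have hfin : g' + q = g := by
      rw [hg'def, add_assoc, add_self_graph, add_zero]
    exact hfin ▸ Kset_add hg'K hqK
  · -- small case: impossible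
    exfalso
    push_neg at hv3
    have hv2 : v.val = 2 := by omega
    have hEab : a ≠ b := fun hc => hba hc.symm
    set E3 : Edge n := mkE hEab with hE3
    clear_value E3
    have hclass0 : ∀ (e1 : Sym2 (Vtx n)) (hnd : ¬ e1.IsDiag),
        topV (⟨e1, hnd⟩ : Edge n) ≤ v →
        (⟨e1, hnd⟩ : Edge n) = e₀ ∨ (⟨e1, hnd⟩ : Edge n) = e₁ ∨ (⟨e1, hnd⟩ : Edge n) = E3 := by
      intro e1
      induction e1 using Sym2.ind with
      | _ p q =>
      intro hnd htop
      have hpq : p ≠ q := fun hc => hnd (Sym2.mk_isDiag_iff.2 hc)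
      have hple : p ≤ topV (⟨s(p,q), hnd⟩ : Edge n) := mem_le_topV (Sym2.mem_mk_left p q)
      have hqle : q ≤ topV (⟨s(p,q), hnd⟩ : Edge n) := mem_le_topV (Sym2.mem_mk_right p q)
      have hpv : p.val ≤ v.val := Fin.le_def.1 (hple.trans htop)
      have hqv : q.val ≤ v.val := Fin.le_def.1 (hqle.trans htop)
      have hp3 : p = a ∨ p = b ∨ p = v := by
        have : p.val = a.val ∨ p.val = b.val ∨ p.val = v.val := by omega
        rcases this with h | h | h
        exacts [Or.inl (Fin.ext h), Or.inr (Or.inl (Fin.ext h)), Or.inr (Or.inr (Fin.ext h))]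
      have hq3 : q = a ∨ q = b ∨ q = v := by
        have : q.val = a.val ∨ q.val = b.val ∨ q.val = v.val := by omega
        rcases this with h | h | h
        exacts [Or.inl (Fin.ext h), Or.inr (Or.inl (Fin.ext h)), Or.inr (Or.inr (Fin.ext h))]
      rcases hp3 with hp | hp | hp <;> rcases hq3 with hq | hq | hq
      · exact absurd (hp.trans hq.symm) hpq
      · exact Or.inr (Or.inr (Subtype.ext (by show s(p,q) = _; rw [hp, hq, hE3]; rfl)))
      · exact Or.inl (Subtype.ext (by show s(p,q) = _; rw [hp, hq, he₀eq]; exact Sym2.eq_swap))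
      · exact Or.inr (Or.inr (Subtype.ext (by show s(p,q) = _; rw [hp, hq, hE3]; exact Sym2.eq_swap)))
      · exact absurd (hp.trans hq.symm) hpq
      · exact Or.inr (Or.inl (Subtype.ext (by show s(p,q) = _; rw [hp, hq, he₁eq]; exact Sym2.eq_swap)))
      · exact Or.inl (Subtype.ext (by show s(p,q) = _; rw [hp, hq, he₀eq]))
      · exact Or.inr (Or.inl (Subtype.ext (by show s(p,q) = _; rw [hp, hq, he₁eq])))
      · exact absurd (hp.trans hq.symm) hpq
    have hsub : ∀ e : Edge n, e ∉ ({e₀, e₁, E3} : Finset (Edge n)) → g e = 0 := by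
      intro e he
      by_contra hc
      have hone := zmod2_ne_zero hc
      have := hclass0 e.1 e.2 (hvmax e ((hmemS e).2 hone))
      rcases this with h | h | h <;>
        (apply he; simp only [Finset.mem_insert, Finset.mem_singleton])
      · exact Or.inl h
      · exact Or.inr (Or.inl h)
      · exact Or.inr (Or.inr h)
    have h01 : e₀ ≠ e₁ := Ne.symm he₁ne
    have h0E : e₀ ≠ E3 := by
      intro hc
      have := congrArg Subtype.val hc
      rw [he₀eq, hE3] at this
      rcases Sym2.eq_iff.1 this with ⟨h, _⟩ | ⟨h, _⟩
      · exact hav h.symm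
      · exact hbv h.symm
    have h1E : e₁ ≠ E3 := by
      intro hc
      have := congrArg Subtype.val hc
      rw [he₁eq, hE3] at this
      rcases Sym2.eq_iff.1 this with ⟨h, _⟩ | ⟨h, _⟩
      · exact hav h.symm
      · exact hbv h.symm
    have hNsum : Nsum g = g e₀ + g e₁ + g E3 := by
      rw [Nsum, ← Finset.sum_subset (Finset.subset_univ ({e₀, e₁, E3} : Finset (Edge n)))
        (fun e _ he => hsub e he)]
      rw [Finset.sum_insert (by simp [h01, h0E]), Finset.sum_insert (by simp [h1E]),
        Finset.sum_singleton, add_assoc]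
    have ca0 : a ∈ e₀.1 := by rw [he₀eq]; exact Sym2.mem_mk_right v a
    have ca1 : a ∉ e₁.1 := by
      rw [he₁eq, Sym2.mem_iff]
      rintro (h | h)
      · exact hav h
      · exact hEab h
    have ca3 : a ∈ E3.1 := by rw [hE3]; exact Sym2.mem_mk_left a b
    have hDa : Dsum g a = g e₀ + g E3 := by
      rw [Dsum, ← Finset.sum_subset (Finset.subset_univ ({e₀, e₁, E3} : Finset (Edge n)))
        (fun e _ he => by rw [hsub e he]; simp)]
      rw [Finset.sum_insert (by simp [h01, h0E]), Finset.sum_insert (by simp [h1E]),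
        Finset.sum_singleton, if_pos ca0, if_neg ca1, if_pos ca3, zero_add]
    have hgE3 : g E3 = 1 := by
      have hz := h1 a
      rw [hDa, hge₀] at hz
      have key : ∀ x : ZMod 2, 1 + x = 0 → x = 1 := by decide
      exact key _ hz
    rw [hNsum, hge₀, hge₁, hgE3] at h2
    exact absurd h2 (by decide)

/-- the subgroup of even graphs -/
def EvAdd (n : ℕ) : AddSubgroup (Graphs n) where
  carrier := {g | (∀ v, Dsum g v = 0) ∧ Nsum g = 0}
  zero_mem' := by
    constructor
    · intro v; simp [Dsum]
    · simp [Nsum]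
  add_mem' := by
    rintro g h ⟨hd1, hn1⟩ ⟨hd2, hn2⟩
    exact ⟨fun v => by rw [Dsum_add, hd1 v, hd2 v, add_zero],
      by rw [Nsum_add, hn1, hn2, add_zero]⟩
  neg_mem' := by
    rintro g ⟨hd, hn⟩
    rw [neg_graph]
    exact ⟨hd, hn⟩

lemma sum_mem_edge (e : Edge n) (c : ZMod 2) :
    ∑ v : Vtx n, (if v ∈ e.1 then c else 0) = 0 := by
  obtain ⟨e1, hnd⟩ := e
  induction e1 using Sym2.ind with
  | _ p q =>
    have hpq : p ≠ q := fun hc => hnd (Sym2.mk_isDiag_iff.2 hc)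
    show ∑ v : Vtx n, (if v ∈ (s(p,q) : Sym2 (Vtx n)) then c else 0) = 0
    rw [← Finset.sum_filter]
    have hf : Finset.univ.filter (fun v : Vtx n => v ∈ (s(p,q) : Sym2 (Vtx n))) = {p, q} := by
      ext w
      simp [Sym2.mem_iff]
    rw [hf, Finset.sum_insert (by simp [hpq]), Finset.sum_singleton]
    exact CharTwo.add_self_eq_zero c

lemma Dsum_total (g : Graphs n) : ∑ v : Vtx n, Dsum g v = 0 := by
  simp only [Dsum]
  rw [Finset.sum_comm]
  rw [Finset.sum_congr rfl fun (e : Edge n) _ => sum_mem_edge e (g e)]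
  simp

lemma Dsum_sum {ι : Type*} (s : Finset ι) (f : ι → Graphs n) (v : Vtx n) :
    Dsum (∑ j ∈ s, f j) v = ∑ j ∈ s, Dsum (f j) v := by
  induction s using Finset.cons_induction with
  | empty => simp [Dsum]
  | cons j s hj ih =>
    rw [Finset.sum_cons, Finset.sum_cons, Dsum_add, ih]

lemma Nsum_sum {ι : Type*} (s : Finset ι) (f : ι → Graphs n) :
    Nsum (∑ j ∈ s, f j) = ∑ j ∈ s, Nsum (f j) := by
  induction s using Finset.cons_induction with
  | empty => simp [Nsum]
  | cons j s hj ih =>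
    rw [Finset.sum_cons, Finset.sum_cons, Nsum_add, ih]

lemma Dsum_tri {x y z : Vtx n} (hxy : x ≠ y) (hxz : x ≠ z) (hyz : y ≠ z) (w : Vtx n) :
    Dsum (tri x y z) w = 0 := by
  rw [tri, Dsum_add, Dsum_add, Dsum_single hxy, Dsum_single hxz, Dsum_single hyz]
  have key : ∀ A B C : ZMod 2, A + B + (A + C) + (B + C) = 0 := by decide
  exact key _ _ _

lemma Nsum_tri {x y z : Vtx n} (hxy : x ≠ y) (hxz : x ≠ z) (hyz : y ≠ z) :
    Nsum (tri x y z) = 1 := by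
  rw [tri, Nsum_add, Nsum_add, Nsum_single hxy, Nsum_single hxz, Nsum_single hyz]
  decide

/-- the parity map -/
def Phi (n : ℕ) : Graphs n →+ ((Fin n → ZMod 2) × ZMod 2) where
  toFun g := (fun i => Dsum g i.succ, Nsum g)
  map_zero' := by
    refine Prod.ext ?_ ?_
    · funext i; simp [Dsum]
    · simp [Nsum]
  map_add' g h := by
    refine Prod.ext ?_ ?_
    · funext i
      exact Dsum_add g h i.succ
    · exact Nsum_add g h

lemma Phi_ker : (Phi n).ker = EvAdd n := by
  ext g
  constructor
  · intro hg
    rw [AddMonoidHom.mem_ker] at hg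
    have h1 : ∀ i : Fin n, Dsum g i.succ = 0 := fun i => congrFun (congrArg Prod.fst hg) i
    have h2 : Nsum g = 0 := congrArg Prod.snd hg
    have h0 : Dsum g 0 = 0 := by
      have ht := Dsum_total g
      rw [Fin.sum_univ_succ] at ht
      rw [Finset.sum_congr rfl fun i _ => h1 i] at ht
      simpa using ht
    refine ⟨fun v => ?_, h2⟩
    rcases Fin.eq_zero_or_eq_succ v with rfl | ⟨i, rfl⟩
    · exact h0
    · exact h1 i
  · rintro ⟨hd, hn⟩
    rw [AddMonoidHom.mem_ker]
    refine Prod.ext ?_ ?_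
    · funext i; exact hd i.succ
    · exact hn

lemma Phi_surj (hn : 2 ≤ n) : Function.Surjective (Phi n) := by
  have hzero_succ : ∀ i : Fin n, (0 : Vtx n) ≠ i.succ := fun i => (Fin.succ_ne_zero i).symm
  have hPhi_single : ∀ j : Fin n,
      Phi n (single 0 j.succ) = (fun i => if i = j then 1 else 0, 1) := by
    intro j
    refine Prod.ext ?_ ?_
    · funext i
      show Dsum (single 0 j.succ) i.succ = if i = j then 1 else 0
      rw [Dsum_single (hzero_succ j) i.succ]
      rw [if_neg (Fin.succ_ne_zero i)]
      by_cases hij : i = j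
      · rw [if_pos (by rw [hij]), if_pos hij, zero_add]
      · rw [if_neg (fun hc => hij (Fin.succ_inj.1 hc)), if_neg hij, zero_add]
    · exact Nsum_single (hzero_succ j)
  rintro ⟨w, t⟩
  classical
  set g0 : Graphs n := ∑ j ∈ Finset.univ.filter (fun j => w j = 1), single 0 j.succ with hg0
  have hPhi_g0 : Phi n g0 = (w, ((Finset.univ.filter (fun j => w j = 1)).card : ZMod 2)) := by
    rw [hg0, map_sum]
    rw [Finset.sum_congr rfl fun j _ => hPhi_single j]
    refine Prod.ext ?_ ?_
    · rw [Prod.fst_sum]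
      funext i
      rw [Finset.sum_apply]
      rw [Finset.sum_ite_eq]
      by_cases hwi : w i = 1
      · simp [hwi]
      · simp [hwi, zmod2_ne_one hwi]
    · rw [Prod.snd_sum]
      simp
  by_cases hts : ((Finset.univ.filter (fun j => w j = 1)).card : ZMod 2) = t
  · exact ⟨g0, by rw [hPhi_g0, hts]⟩
  · -- need to adjust parity by a triangle
    set v0 : Vtx n := ⟨0, by omega⟩ with hv0
    set v1 : Vtx n := ⟨1, by omega⟩ with hv1
    set v2 : Vtx n := ⟨2, by omega⟩ with hv2
    have h01 : v0 ≠ v1 := by simp [hv0, hv1, Fin.ext_iff]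
    have h02 : v0 ≠ v2 := by simp [hv0, hv2, Fin.ext_iff]
    have h12 : v1 ≠ v2 := by simp [hv1, hv2, Fin.ext_iff]
    refine ⟨g0 + tri v0 v1 v2, ?_⟩
    rw [map_add, hPhi_g0]
    have htri : Phi n (tri v0 v1 v2) = (0, 1) := by
      refine Prod.ext ?_ ?_
      · funext i
        exact Dsum_tri h01 h02 h12 i.succ
      · exact Nsum_tri h01 h02 h12
    rw [htri]
    have ht : t = ((Finset.univ.filter (fun j => w j = 1)).card : ZMod 2) + 1 := by
      revert hts
      generalize ((Finset.univ.filter (fun j => w j = 1)).card : ZMod 2) = x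
      revert t x
      decide
    refine Prod.ext ?_ ?_
    · show w + 0 = w
      rw [add_zero]
    · show _ + 1 = t
      rw [ht]

lemma expo_aux (m : ℕ) : (m+3)*(m+2)/2 = (m+3)*m/2 + (m+3) := by
  have hpar : ∃ c, (m+3)*m = 2*c := by
    rcases Nat.even_or_odd m with ⟨k, hk⟩ | ⟨k, hk⟩
    · exact ⟨(k+k+3)*k, by subst hk; ring⟩
    · exact ⟨(k+2)*(2*k+1), by subst hk; ring⟩
  obtain ⟨c, hc⟩ := hpar
  have hB : (m+3)*(m+2) = (m+3)*m + 2*(m+3) := by ring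
  omega

lemma card_EvAdd (hn : 2 ≤ n) : Nat.card (EvAdd n) = 2 ^ ((n+1)*(n-2)/2) := by
  classical
  obtain ⟨m, rfl⟩ : ∃ m, n = m + 2 := ⟨n - 2, by omega⟩
  have hcard_eq := AddSubgroup.card_eq_card_quotient_mul_card_addSubgroup (Phi (m+2)).ker
  have hquot : Nat.card (Graphs (m+2) ⧸ (Phi (m+2)).ker)
      = Nat.card ((Fin (m+2) → ZMod 2) × ZMod 2) :=
    Nat.card_congr (QuotientAddGroup.quotientKerEquivOfSurjective (Phi (m+2))
      (Phi_surj hn)).toEquiv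
  have hG : Nat.card (Graphs (m+2)) = 2 ^ ((m+2+1).choose 2) := by
    rw [Nat.card_eq_fintype_card, Fintype.card_fun]
    congr 1
    rw [Sym2.card_subtype_not_diag, Fintype.card_fin]
  have hT : Nat.card ((Fin (m+2) → ZMod 2) × ZMod 2) = 2 ^ (m+2+1) := by
    rw [Nat.card_eq_fintype_card, Fintype.card_prod, Fintype.card_fun, ZMod.card,
      Fintype.card_fin]
    exact (pow_succ 2 (m+2)).symm
  have hker : Nat.card (Phi (m+2)).ker = Nat.card (EvAdd (m+2)) := by rw [Phi_ker]
  rw [hquot, hT, hker, hG] at hcard_eq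
  have hC : (m+2+1).choose 2 = (m+3)*m/2 + (m+3) := by
    rw [show m+2+1 = m+3 from by omega, Nat.choose_two_right,
      show m+3-1 = m+2 from by omega]
    exact expo_aux m
  rw [hC, pow_add, show m+2+1 = m+3 from by omega] at hcard_eq
  rw [show m+2+1 = m+3 from by omega, show m+2-2 = m from by omega]
  have hpos : 0 < 2 ^ (m+3) := Nat.pow_pos (by norm_num)
  rw [mul_comm (2 ^ ((m+3)*m/2))] at hcard_eq
  exact (Nat.eq_of_mul_eq_mul_left hpos hcard_eq).symm

end Aux

/-- For `n ≥ 2`, the subgroup `D_n` of `Graphs(n+1) ⋊ S_{n+1}` generated by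
`x_1, …, x_n` has order `2^((n+1)(n-2)/2) · (n+1)!`. -/
theorem stmt11 (n : ℕ) (hn : 2 ≤ n) :
    Nat.card (Dn n) = 2 ^ ((n+1)*(n-2)/2) * Nat.factorial (n+1) := by
  classical
  set f : Dn n →* Perm (Vtx n) :=
    (SemidirectProduct.rightHom : DG n →* Perm (Vtx n)).comp (Dn n).subtype with hf
  have hsurj : Function.Surjective f := by
    intro σ
    obtain ⟨h, hh⟩ := exists_graph σ
    exact ⟨⟨⟨Multiplicative.ofAdd h, σ⟩, hh⟩, rfl⟩
  have hkerEv : f.ker ≃ EvAdd n := by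
    refine ⟨fun x => ⟨Multiplicative.toAdd x.1.1.left, ?_⟩,
      fun y => ⟨⟨⟨Multiplicative.ofAdd y.1, 1⟩,
        ev_mem_aux (mu y.1) y.1 rfl y.2.1 y.2.2⟩, rfl⟩, ?_, ?_⟩
    · obtain ⟨hd, hn'⟩ := Dn_le_W x.1.2
      have hr : x.1.1.right = 1 := MonoidHom.mem_ker.mp x.2
      constructor
      · intro v
        rw [hd v, hr]
        show (if v = 0 then (1:ZMod 2) else 0) + (if v = (1 : Perm (Vtx n)) 0 then 1 else 0) = 0
        show (if v = 0 then (1:ZMod 2) else 0) + (if v = 0 then 1 else 0) = 0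
        exact CharTwo.add_self_eq_zero _
      · rw [hn', hr]
        simp [sgnBit]
    · rintro ⟨⟨⟨l, r⟩, hp⟩, hk⟩
      have hr : r = 1 := MonoidHom.mem_ker.mp hk
      subst hr
      rfl
    · intro y
      rfl
  have hcards := Subgroup.card_eq_card_quotient_mul_card_subgroup f.ker
  have hquot : Nat.card (Dn n ⧸ f.ker) = Nat.card (Perm (Vtx n)) :=
    Nat.card_congr (QuotientGroup.quotientKerEquivOfSurjective f hsurj).toEquiv
  have hperm : Nat.card (Perm (Vtx n)) = Nat.factorial (n+1) := by
    rw [Nat.card_eq_fintype_card, Fintype.card_perm, Fintype.card_fin]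
  have hker : Nat.card f.ker = 2 ^ ((n+1)*(n-2)/2) := by
    rw [Nat.card_congr hkerEv, card_EvAdd hn]
  rw [hcards, hquot, hperm, hker, mul_comm]
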